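/- It is decidable whether a bad state is reachable in the region-abstracted transition system H from the initial state W₀; more generally, reachability of a bad state is decidable for any finitely-branching transition system over words over a finite powerset alphabet whose successor sets are computable, in which the inverse of the monotone domination order ⪯ is a simulation and badness is downward closed under ⪯. -/

import Mathlib

/-- Monotone domination on words over a powerset alphabet, where each letter
(a finite subset of the base set) is represented by the list of its
elements: `W₁ ⪯ W₂` iff there is a strictly increasing map of positions
along which each letter of `W₁` is (as a set) contained in the corresponding
letter of `W₂`. -/
def MonDomL (W₁ W₂ : List (List ℕ)) : Prop :=
  ∃ f : Fin W₁.length → Fin W₂.length,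
    StrictMono f ∧ ∀ i : Fin W₁.length, W₁.get i ⊆ W₂.get (f i)

/-- A word over the powerset alphabet `𝒫({0, …, k-1})`. -/
def ValidWord (k : ℕ) (W : List (List ℕ)) : Prop :=
  ∀ s ∈ W, ∀ x ∈ s, x < k

namespace BadReach

abbrev Ltr := List ℕ
abbrev Wd := List Ltr

def SF : Wd → Wd → Prop := List.SublistForall₂ (· ⊆ ·)

instance : IsRefl Ltr (· ⊆ ·) := ⟨fun l => List.Subset.refl l⟩
instance : IsTrans Ltr (· ⊆ ·) := ⟨fun _ _ _ h h' => List.Subset.trans h h'⟩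
instance : IsPreorder Ltr (· ⊆ ·) := { }

theorem SF.trans' {a b c : Wd} (h1 : SF a b) (h2 : SF b c) : SF a c :=
  IsTrans.trans (r := List.SublistForall₂ (α := Ltr) (· ⊆ ·)) a b c h1 h2

theorem SF_nil_right {l : Wd} (h : SF l []) : l = [] := by
  cases h; rfl

theorem SF_cons_left {a : Ltr} {l W : Wd} (h : SF (a :: l) W) : SF l W := by
  generalize hE : a :: l = l₁ at h
  induction h generalizing a l with
  | nil => exact absurd hE (by simp)
  | cons hr hsf ih =>
    cases hE
    exact List.SublistForall₂.cons_right hsf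
  | cons_right hsf ih =>
    exact List.SublistForall₂.cons_right (ih hE)

theorem monDomL_of_sf {W₁ W₂ : Wd} (h : SF W₁ W₂) : MonDomL W₁ W₂ := by
  induction h with
  | nil => exact ⟨fun i => i.elim0, fun i => i.elim0, fun i => i.elim0⟩
  | @cons a₁ a₂ l₁ l₂ hab hsf ih =>
    obtain ⟨f, hmono, hsub⟩ := ih
    refine ⟨Fin.cases ⟨0, Nat.succ_pos _⟩ (fun i => (f i).succ), ?_, ?_⟩
    · intro i j hij
      induction i using Fin.cases with
      | zero =>
        induction j using Fin.cases with
        | zero => exact absurd hij (lt_irrefl _)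
        | succ j' =>
          simp only [Fin.cases_zero, Fin.cases_succ]
          exact Fin.mk_lt_of_lt_val (f j').succ_pos
      | succ i' =>
        induction j using Fin.cases with
        | zero => exact absurd hij (by simp [Fin.lt_def])
        | succ j' =>
          simp only [Fin.cases_succ]
          exact Fin.succ_lt_succ_iff.mpr (hmono (Fin.succ_lt_succ_iff.mp hij))
    · intro i
      induction i using Fin.cases with
      | zero => simpa using hab
      | succ i' => simpa using hsub i'
  | @cons_right a l₁ l₂ hsf ih =>
    obtain ⟨f, hmono, hsub⟩ := ih
    refine ⟨fun i => (f i).succ, fun i j hij => Fin.succ_lt_succ_iff.mpr (hmono hij), ?_⟩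
    intro i
    simpa using hsub i

theorem sf_of_monDomL {W₁ W₂ : Wd} (h : MonDomL W₁ W₂) : SF W₁ W₂ := by
  induction W₂ generalizing W₁ with
  | nil =>
    cases W₁ with
    | nil => exact List.SublistForall₂.nil
    | cons a l =>
      obtain ⟨f, -, -⟩ := h
      exact (f ⟨0, Nat.succ_pos _⟩).elim0
  | cons b m ih =>
    cases W₁ with
    | nil => exact List.SublistForall₂.nil
    | cons a l =>
      obtain ⟨f, hmono, hsub⟩ := h
      by_cases h0 : (f ⟨0, Nat.succ_pos _⟩ : ℕ) = 0
      · refine List.SublistForall₂.cons ?_ (ih ?_)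
        · have h00 : f ⟨0, Nat.succ_pos _⟩ = ⟨0, Nat.succ_pos _⟩ := Fin.ext h0
          have h1 := hsub ⟨0, Nat.succ_pos _⟩
          rw [h00] at h1
          exact h1
        · have hpos : ∀ i : Fin l.length, 0 < (f i.succ : ℕ) := by
            intro i
            have h1 : f ⟨0, Nat.succ_pos _⟩ < f i.succ := hmono (by simp [Fin.lt_def])
            have h2 : (f ⟨0, Nat.succ_pos _⟩ : ℕ) < (f i.succ : ℕ) := h1
            omega
          have hbnd : ∀ i : Fin l.length, (f i.succ : ℕ) - 1 < m.length := by
            intro i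
            have h1 : (f i.succ : ℕ) < m.length + 1 := (f i.succ).isLt
            have := hpos i
            omega
          refine ⟨fun i => ⟨(f i.succ : ℕ) - 1, hbnd i⟩, ?_, ?_⟩
          · intro i j hij
            have h1 : (f i.succ : ℕ) < (f j.succ : ℕ) :=
              hmono (Fin.succ_lt_succ_iff.mpr hij)
            have := hpos i
            simp only [Fin.mk_lt_mk]
            omega
          · intro i
            have h1 := hsub i.succ
            have hfe : f i.succ =
                ⟨((f i.succ : ℕ) - 1) + 1, by have := hbnd i; simp only [List.length_cons]; omega⟩ :=
              Fin.ext (by have := hpos i; simp only [Fin.val_mk]; omega)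
            rw [hfe] at h1
            exact h1
      · refine List.SublistForall₂.cons_right (ih ?_)
        have hpos : ∀ i : Fin (a :: l).length, 0 < (f i : ℕ) := by
          intro i
          rcases Nat.eq_zero_or_pos (i : ℕ) with hi | hi
          · have he : i = ⟨0, Nat.succ_pos _⟩ := Fin.ext hi
            subst he
            omega
          · have h1 : f ⟨0, Nat.succ_pos _⟩ < f i := hmono (Fin.lt_def.mpr hi)
            have h2 : (f ⟨0, Nat.succ_pos _⟩ : ℕ) < (f i : ℕ) := h1
            omega
        have hbnd : ∀ i : Fin (a :: l).length, (f i : ℕ) - 1 < m.length := by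
          intro i
          have h1 : (f i : ℕ) < m.length + 1 := (f i).isLt
          have := hpos i
          omega
        refine ⟨fun i => ⟨(f i : ℕ) - 1, hbnd i⟩, ?_, ?_⟩
        · intro i j hij
          have h1 : (f i : ℕ) < (f j : ℕ) := hmono hij
          have := hpos i
          simp only [Fin.mk_lt_mk]
          omega
        · intro i
          have h1 := hsub i
          have hfe : f i = ⟨((f i : ℕ) - 1) + 1, by have := hbnd i; simp only [List.length_cons]; omega⟩ :=
            Fin.ext (by have := hpos i; simp only [Fin.val_mk]; omega)
          rw [hfe] at h1
          exact h1


/-! ### Boolean checkers -/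

def memB (x : ℕ) (b : List ℕ) : Bool :=
  b.foldr (fun y r => decide (y = x) || r) false

theorem memB_iff {x : ℕ} {b : List ℕ} : memB x b = true ↔ x ∈ b := by
  induction b with
  | nil => simp [memB]
  | cons y b ih =>
    simp only [memB, List.foldr_cons, Bool.or_eq_true, decide_eq_true_eq, List.mem_cons]
    rw [← memB]
    rw [ih]
    constructor
    · rintro (h | h)
      · exact Or.inl h.symm
      · exact Or.inr h
    · rintro (h | h)
      · exact Or.inl h.symm
      · exact Or.inr h

def subB (a b : Ltr) : Bool :=
  a.foldr (fun x r => memB x b && r) true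

theorem subB_iff {a b : Ltr} : subB a b = true ↔ a ⊆ b := by
  induction a with
  | nil => simp [subB, List.nil_subset]
  | cons x a ih =>
    simp only [subB, List.foldr_cons, Bool.and_eq_true, List.cons_subset]
    rw [← subB, ih, memB_iff]

def stepG (l : Wd) (b : Ltr) : Wd :=
  match l with
  | [] => []
  | a :: l' => if subB a b then l' else a :: l'

def monDom (W₁ W₂ : Wd) : Bool :=
  (W₂.foldl stepG W₁).isEmpty

theorem foldl_stepG_nil : ∀ W₂ : Wd, W₂.foldl stepG [] = []
  | [] => rfl
  | _ :: m => by
    rw [List.foldl_cons]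
    exact foldl_stepG_nil m

theorem foldl_stepG_iff : ∀ (W₂ W₁ : Wd), W₂.foldl stepG W₁ = [] ↔ SF W₁ W₂
  | [], W₁ => by
    simp only [List.foldl_nil]
    constructor
    · rintro rfl; exact List.SublistForall₂.nil
    · exact SF_nil_right
  | b :: m, [] => by
    rw [List.foldl_cons]
    show m.foldl stepG [] = [] ↔ _
    rw [foldl_stepG_nil]
    simp only [true_iff]
    exact List.SublistForall₂.nil
  | b :: m, a :: l => by
    rw [List.foldl_cons]
    by_cases hs : subB a b = true
    · rw [show stepG (a :: l) b = l by simp [stepG, hs]]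
      rw [foldl_stepG_iff m l]
      constructor
      · intro h
        exact List.SublistForall₂.cons (subB_iff.mp hs) h
      · intro h
        cases h with
        | cons hr hsf => exact hsf
        | cons_right hsf => exact SF_cons_left hsf
    · rw [show stepG (a :: l) b = a :: l by simp [stepG, hs]]
      rw [foldl_stepG_iff m (a :: l)]
      constructor
      · exact fun h => List.SublistForall₂.cons_right h
      · intro h
        cases h with
        | cons hr hsf => exact absurd (subB_iff.mpr hr) hs
        | cons_right hsf => exact hsf

theorem monDom_iff {W₁ W₂ : Wd} : monDom W₁ W₂ = true ↔ SF W₁ W₂ := by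
  rw [monDom, List.isEmpty_iff, foldl_stepG_iff]

/-! ### Higman's lemma instantiation -/

theorem pwo_valid (k : ℕ) : {W : Wd | ValidWord k W}.PartiallyWellOrderedOn SF := by
  have base : {l : Ltr | ∀ x ∈ l, x < k}.PartiallyWellOrderedOn (· ⊆ ·) := by
    intro f'
    let f := fun n => (f' n).1
    have hf : ∀ n, ∀ x ∈ f n, x < k := fun n => (f' n).2
    have hg : ∀ n, (f n).toFinset ∈ (Finset.range k).powerset := by
      intro n
      rw [Finset.mem_powerset]
      intro x hx
      rw [Finset.mem_range]
      exact hf n x (List.mem_toFinset.mp hx)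
    let g : ℕ → ((Finset.range k).powerset : Finset (Finset ℕ)) := fun n => ⟨(f n).toFinset, hg n⟩
    obtain ⟨m, n, hmn, heq⟩ := Finite.exists_ne_map_eq_of_infinite g
    have heq' : (f m).toFinset = (f n).toFinset := congrArg Subtype.val heq
    rcases hmn.lt_or_gt with h | h
    · exact ⟨m, n, h, show f m ⊆ f n from fun x hx => List.mem_toFinset.mp (heq' ▸ List.mem_toFinset.mpr hx)⟩
    · exact ⟨n, m, h, show f n ⊆ f m from fun x hx => List.mem_toFinset.mp (heq'.symm ▸ List.mem_toFinset.mpr hx)⟩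
  have H := base.partiallyWellOrderedOn_sublistForall₂ (r := fun a b : Ltr => a ⊆ b)
  have hset : {l : List Ltr | ∀ x ∈ l, x ∈ {l : Ltr | ∀ x ∈ l, x < k}} = {W : Wd | ValidWord k W} := by
    ext W
    simp only [Set.mem_setOf_eq]
    rfl
  rw [hset] at H
  exact H

/-! ### Finite basis -/

theorem exists_basis (k : ℕ) (S : Set Wd) (hS : ∀ W ∈ S, ValidWord k W) :
    ∃ B : List Wd, (∀ b ∈ B, b ∈ S) ∧ ∀ W ∈ S, ∃ b ∈ B, SF b W := by
  by_contra hcon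
  have H : ∀ B : List Wd, (∀ b ∈ B, b ∈ S) → ∃ W, W ∈ S ∧ ∀ b ∈ B, ¬SF b W := by
    intro B hB
    by_contra h2
    push_neg at h2
    exact hcon ⟨B, hB, fun W hW => h2 W hW⟩
  classical
  let pick : {B : List Wd // ∀ b ∈ B, b ∈ S} → Wd := fun p => (H p.1 p.2).choose
  have pick_mem : ∀ p, pick p ∈ S := fun p => (H p.1 p.2).choose_spec.1
  have pick_not : ∀ p, ∀ b ∈ p.1, ¬SF b (pick p) := fun p => (H p.1 p.2).choose_spec.2
  let L : ℕ → {B : List Wd // ∀ b ∈ B, b ∈ S} := fun n =>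
    Nat.rec ⟨[], by simp⟩
      (fun _ p => ⟨pick p :: p.1, by
        intro b hb
        rcases List.mem_cons.mp hb with h | h
        · exact h ▸ pick_mem p
        · exact p.2 b h⟩) n
  let f : ℕ → Wd := fun n => pick (L n)
  have hLsucc : ∀ n, (L (n + 1)).val = f n :: (L n).val := fun n => rfl
  have hmem : ∀ m n, m < n → f m ∈ (L n).val := by
    intro m n hmn
    induction n with
    | zero => omega
    | succ n ih =>
      rw [hLsucc n]
      rcases Nat.lt_succ_iff_lt_or_eq.mp hmn with h | h
      · exact List.mem_cons_of_mem _ (ih h)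
      · subst h
        exact List.mem_cons_self
  obtain ⟨m, n, hmn, hsf⟩ := pwo_valid k (fun n => ⟨f n, hS _ (pick_mem (L n))⟩)
  exact pick_not (L n) (f m) (hmem m n hmn) hsf


/-! ### generic boolean list combinators -/

def natAll (p : ℕ → Bool) : ℕ → Bool := fun n => Nat.rec true (fun y IH => IH && p y) n

theorem natAll_iff {p : ℕ → Bool} {n : ℕ} : natAll p n = true ↔ ∀ i < n, p i = true := by
  induction n with
  | zero => simp [natAll]
  | succ n ih =>
    show (natAll p n && p n) = true ↔ _
    rw [Bool.and_eq_true, ih]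
    constructor
    · rintro ⟨h1, h2⟩ i hi
      rcases Nat.lt_succ_iff_lt_or_eq.mp hi with h | h
      · exact h1 i h
      · exact h ▸ h2
    · intro h
      exact ⟨fun i hi => h i (Nat.lt_succ_of_lt hi), h n (Nat.lt_succ_self n)⟩

def listAllB {α : Type} (p : α → Bool) (l : List α) : Bool :=
  natAll (fun i => l[i]?.elim true p) l.length

theorem listAllB_iff {α : Type} {p : α → Bool} {l : List α} :
    listAllB p l = true ↔ ∀ x ∈ l, p x = true := by
  rw [listAllB, natAll_iff]
  constructor
  · intro h x hx
    obtain ⟨i, rfl⟩ := List.mem_iff_get.mp hx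
    have := h i.1 i.2
    rw [List.getElem?_eq_getElem i.2] at this
    simpa using this
  · intro h i hi
    rw [List.getElem?_eq_getElem hi]
    simp only [Option.elim_some]
    exact h _ (List.getElem_mem hi)

def listAnyB {α : Type} (p : α → Bool) (l : List α) : Bool :=
  !listAllB (fun x => !p x) l

theorem listAnyB_iff {α : Type} {p : α → Bool} {l : List α} :
    listAnyB p l = true ↔ ∃ x ∈ l, p x = true := by
  have hA : listAllB (fun x => !p x) l = true ↔ ∀ x ∈ l, p x = false := by
    rw [listAllB_iff]
    simp only [Bool.not_eq_true']
  rw [listAnyB, Bool.not_eq_true', Bool.eq_false_iff, Ne, hA]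
  push_neg
  simp only [Bool.ne_false_iff]

def memW (x : Wd) (l : List Wd) : Bool := listAnyB (fun y => decide (y = x)) l

theorem memW_iff {x : Wd} {l : List Wd} : memW x l = true ↔ x ∈ l := by
  rw [memW, listAnyB_iff]
  constructor
  · rintro ⟨y, hy, h⟩
    rwa [show y = x from of_decide_eq_true h] at hy
  · intro h
    exact ⟨x, h, by simp⟩

def validB (k : ℕ) (W : Wd) : Bool :=
  listAllB (fun s => listAllB (fun x => decide (x < k)) s) W

theorem validB_iff {k : ℕ} {W : Wd} : validB k W = true ↔ ValidWord k W := by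
  rw [validB, listAllB_iff]
  constructor
  · intro h s hs x hx
    exact of_decide_eq_true (listAllB_iff.mp (h s hs) x hx)
  · intro h s hs
    rw [listAllB_iff]
    intro x hx
    exact decide_eq_true (h s hs x hx)

/-! ### path checking -/

section Sys

variable (succ : Wd → List Wd) (bad : Wd → Bool)

def stepRel : Wd → Wd → Prop := fun X Y => Y ∈ succ X

def Reach (W₀ : Wd) : Prop :=
  ∃ W, Relation.ReflTransGen (stepRel succ) W₀ W ∧ bad W = true

def adjB (M : List Wd) (i : ℕ) : Bool :=
  M[i]?.elim true fun x => M[i + 1]?.elim true fun y => memW y (succ x)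

def chainB (M : List Wd) : Bool := natAll (adjB succ M) (M.length - 1)

def lastBadB (M : List Wd) : Bool := (M.reverse.head?).elim false bad

def pathChk (W₀ : Wd) (L : List Wd) : Bool :=
  chainB succ (W₀ :: L) && lastBadB bad (W₀ :: L)

theorem chainB_iff {M : List Wd} : chainB succ M = true ↔ List.Chain' (stepRel succ) M := by
  rw [chainB, natAll_iff, List.Chain', List.isChain_iff_getElem]
  constructor
  · intro h i hi
    have h2 := h i (by omega)
    rw [adjB, List.getElem?_eq_getElem (by omega), List.getElem?_eq_getElem (by omega)] at h2
    simp only [Option.elim_some] at h2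
    exact memW_iff.mp h2
  · intro h i hi
    rw [adjB, List.getElem?_eq_getElem (by omega), List.getElem?_eq_getElem (by omega)]
    simp only [Option.elim_some]
    exact memW_iff.mpr (h i (by omega))

theorem pathChk_iff {W₀ : Wd} : (∃ L, pathChk succ bad W₀ L = true) ↔ Reach succ bad W₀ := by
  constructor
  · rintro ⟨L, h⟩
    rw [pathChk, Bool.and_eq_true] at h
    obtain ⟨hch, hlast⟩ := h
    rw [chainB_iff] at hch
    have hchain : List.Chain (stepRel succ) W₀ L := hch
    have hne : (W₀ :: L) ≠ [] := List.cons_ne_nil _ _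
    have hlast' : bad ((W₀ :: L).getLast hne) = true := by
      rw [lastBadB, List.head?_reverse, List.getLast?_eq_getLast hne] at hlast
      simpa using hlast
    exact ⟨(W₀ :: L).getLast hne,
      List.relationReflTransGen_of_exists_isChain_cons L hchain rfl, hlast'⟩
  · rintro ⟨W, hrtg, hbad⟩
    obtain ⟨L, hchain, hlast⟩ := List.exists_isChain_cons_of_relationReflTransGen hrtg
    refine ⟨L, ?_⟩
    rw [pathChk, Bool.and_eq_true]
    constructor
    · rw [chainB_iff]
      exact hchain
    · rw [lastBadB, List.head?_reverse,
        List.getLast?_eq_getLast (List.cons_ne_nil _ _)]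
      simpa [hlast] using hbad

/-! ### certificate checking -/

def certChk (k : ℕ) (W₀ : Wd) (B : List Wd) : Bool :=
  listAnyB (fun b => monDom b W₀) B &&
    listAllB (fun b => validB k b && !bad b &&
      listAllB (fun W' => listAnyB (fun b' => monDom b' W') B) (succ b)) B

variable {k : ℕ} {succ} {bad}

theorem cert_sound
    (hvalid : ∀ W W', ValidWord k W → W' ∈ succ W → ValidWord k W')
    (hsim : ∀ W₁ W₂ W₂', ValidWord k W₁ → ValidWord k W₂ → MonDomL W₁ W₂ →
        W₂' ∈ succ W₂ → ∃ W₁' ∈ succ W₁, MonDomL W₁' W₂')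
    (hdown : ∀ W W', MonDomL W W' → bad W' = true → bad W = true)
    {W₀ : Wd} (hW₀ : ValidWord k W₀) {B : List Wd}
    (hc : certChk succ bad k W₀ B = true) : ¬Reach succ bad W₀ := by
  rw [certChk, Bool.and_eq_true, listAnyB_iff, listAllB_iff] at hc
  obtain ⟨⟨b₀, hb₀B, hb₀⟩, hall⟩ := hc
  have hprops : ∀ b ∈ B, ValidWord k b ∧ bad b = false ∧
      ∀ W' ∈ succ b, ∃ b' ∈ B, SF b' W' := by
    intro b hb
    have := hall b hb
    rw [Bool.and_eq_true, Bool.and_eq_true, listAllB_iff] at this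
    obtain ⟨⟨hv, hnb⟩, hsucc⟩ := this
    refine ⟨validB_iff.mp hv, by simpa using hnb, fun W' hW' => ?_⟩
    have := hsucc W' hW'
    rw [listAnyB_iff] at this
    obtain ⟨b', hb', hm⟩ := this
    exact ⟨b', hb', monDom_iff.mp hm⟩
  have hinv : ∀ W, Relation.ReflTransGen (stepRel succ) W₀ W →
      ValidWord k W ∧ ∃ b ∈ B, SF b W := by
    intro W h
    induction h with
    | refl => exact ⟨hW₀, b₀, hb₀B, monDom_iff.mp hb₀⟩
    | tail hWW' hstep ih =>
      obtain ⟨hWv, b, hbB, hbW⟩ := ih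
      obtain ⟨hbv, -, hbsucc⟩ := hprops b hbB
      obtain ⟨b'', hb''succ, hb''⟩ := hsim b _ _ hbv hWv (monDomL_of_sf hbW) hstep
      obtain ⟨b', hb'B, hb'⟩ := hbsucc b'' hb''succ
      exact ⟨hvalid _ _ hWv hstep, b', hb'B, hb'.trans' (sf_of_monDomL hb'')⟩
  rintro ⟨W, hrtg, hbad⟩
  obtain ⟨-, b, hbB, hbW⟩ := hinv W hrtg
  obtain ⟨-, hnb, -⟩ := hprops b hbB
  rw [hdown b W (monDomL_of_sf hbW) hbad] at hnb
  exact absurd hnb (by simp)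

theorem cert_complete
    (hvalid : ∀ W W', ValidWord k W → W' ∈ succ W → ValidWord k W')
    {W₀ : Wd} (hW₀ : ValidWord k W₀) (hnr : ¬Reach succ bad W₀) :
    ∃ B, certChk succ bad k W₀ B = true := by
  obtain ⟨B, hBmem, hBbasis⟩ := exists_basis k
    {W : Wd | ValidWord k W ∧ ¬Reach succ bad W} (fun W hW => hW.1)
  refine ⟨B, ?_⟩
  rw [certChk, Bool.and_eq_true, listAnyB_iff, listAllB_iff]
  constructor
  · obtain ⟨b, hbB, hb⟩ := hBbasis W₀ ⟨hW₀, hnr⟩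
    exact ⟨b, hbB, monDom_iff.mpr hb⟩
  · intro b hbB
    obtain ⟨hbv, hbnr⟩ := hBmem b hbB
    rw [Bool.and_eq_true, Bool.and_eq_true, listAllB_iff]
    refine ⟨⟨validB_iff.mpr hbv, ?_⟩, ?_⟩
    · simp only [Bool.not_eq_true']
      by_contra h
      exact hbnr ⟨b, Relation.ReflTransGen.refl, by simpa using h⟩
    · intro W' hW'
      rw [listAnyB_iff]
      have hW'S : W' ∈ {W : Wd | ValidWord k W ∧ ¬Reach succ bad W} := by
        refine ⟨hvalid _ _ hbv hW', fun hr => hbnr ?_⟩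
        obtain ⟨W, hrtg, hbad⟩ := hr
        exact ⟨W, Relation.ReflTransGen.head hW' hrtg, hbad⟩
      obtain ⟨b', hb'B, hb'⟩ := hBbasis W' hW'S
      exact ⟨b', hb'B, monDom_iff.mpr hb'⟩

end Sys


section Comp

open Computable

variable {α β : Type} [Primcodable α] [Primcodable β]

theorem computable_and {f g : α → Bool} (hf : Computable f) (hg : Computable g) :
    Computable fun a => f a && g a :=
  (Computable.cond hf hg (Computable.const false)).of_eq fun a => by cases f a <;> simp

theorem computable_not {f : α → Bool} (hf : Computable f) :
    Computable fun a => !f a :=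
  (Computable.cond hf (Computable.const false) (Computable.const true)).of_eq fun a => by
    cases f a <;> simp

theorem computable_or {f g : α → Bool} (hf : Computable f) (hg : Computable g) :
    Computable fun a => f a || g a :=
  (Computable.cond hf (Computable.const true) hg).of_eq fun a => by cases f a <;> simp

theorem natAll_computable {p : α → ℕ → Bool} (hp : Computable₂ p) :
    Computable₂ fun a n => natAll (p a) n := by
  have hh : Computable₂ fun (an : α × ℕ) (y : ℕ × Bool) => y.2 && p an.1 y.1 :=
    (computable_and (snd.comp snd)
      (hp.comp (fst.comp fst) (fst.comp snd))).to₂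
  have := Computable.nat_rec (f := fun an : α × ℕ => an.2)
    (g := fun _ : α × ℕ => true)
    (h := fun (an : α × ℕ) (y : ℕ × Bool) => y.2 && p an.1 y.1)
    snd (const true) hh
  exact this.to₂.of_eq fun _ => rfl

theorem optElim_computable {o : α → Option β} {d : α → σ} {f : α → β → σ} [Primcodable σ]
    (ho : Computable o) (hd : Computable d) (hf : Computable₂ f) :
    Computable fun a => (o a).elim (d a) (f a) :=
  (Computable.option_casesOn ho hd hf).of_eq fun a => by cases o a <;> rfl

theorem listAllB_computable {p : α → β → Bool} (hp : Computable₂ p) :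
    Computable₂ fun a l => listAllB (p a) l := by
  have hq : Computable₂ fun (al : α × List β) (i : ℕ) =>
      al.2[i]?.elim true (p al.1) := by
    refine (optElim_computable (o := fun x : (α × List β) × ℕ => x.1.2[x.2]?)
      (d := fun _ => true) (f := fun x b => p x.1.1 b)
      (Primrec.list_getElem?.to_comp.comp (snd.comp fst) snd) (const true)
      ((hp.comp (fst.comp (fst.comp fst)) snd).to₂)).to₂
  have := (natAll_computable hq).comp Computable.id
    (Primrec.list_length.to_comp.comp snd)
  exact this.to₂.of_eq fun _ => rfl

theorem listAnyB_computable {p : α → β → Bool} (hp : Computable₂ p) :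
    Computable₂ fun a l => listAnyB (p a) l := by
  have h1 : Computable₂ fun a (b : β) => !p a b := (computable_not hp).to₂
  exact (computable_not (listAllB_computable h1)).to₂.of_eq fun _ => rfl

theorem memW_computable : Computable₂ memW := by
  have hp : Computable₂ fun (x : Wd) (y : Wd) => decide (y = x) :=
    (Primrec.eq.comp Primrec.snd Primrec.fst).decide.to_comp.to₂
  exact (listAnyB_computable hp).of_eq fun _ => rfl

theorem validB_computable (k : ℕ) : Computable (validB k) := by
  have h1 : Computable₂ fun (_ : Unit) (x : ℕ) => decide (x < k) :=
    ((Primrec.nat_lt.comp Primrec.snd (Primrec.const k)).decide.to_comp).to₂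
  have h2 : Computable₂ fun (_ : Unit) (s : Ltr) =>
      listAllB (fun x => decide (x < k)) s := listAllB_computable h1
  have h3 : Computable₂ fun (_ : Unit) (W : Wd) =>
      listAllB (fun s => listAllB (fun x => decide (x < k)) s) W :=
    listAllB_computable h2
  exact (h3.comp (const ()) Computable.id).of_eq fun W => rfl

theorem primrec_memB : Primrec₂ memB := by
  have hh : Primrec₂ fun (a : ℕ × List ℕ) (p : ℕ × Bool) => (decide (p.1 = a.1) || p.2) := by
    have : Primrec fun x : (ℕ × List ℕ) × ℕ × Bool => (decide (x.2.1 = x.1.1) || x.2.2) :=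
      (Primrec.cond (Primrec.eq.comp (Primrec.fst.comp Primrec.snd)
          (Primrec.fst.comp Primrec.fst)).decide
        (Primrec.const true) (Primrec.snd.comp Primrec.snd)).of_eq fun x => by
          rcases x with ⟨⟨a, b⟩, ⟨c, d⟩⟩
          by_cases h : c = a <;> simp [h]
    exact this.to₂
  exact (Primrec.list_foldr Primrec.snd (Primrec.const false) hh).to₂.of_eq fun _ _ => rfl

theorem primrec_subB : Primrec₂ subB := by
  have hh : Primrec₂ fun (a : Ltr × Ltr) (p : ℕ × Bool) => (memB p.1 a.2 && p.2) := by
    have : Primrec fun x : (Ltr × Ltr) × ℕ × Bool => (memB x.2.1 x.1.2 && x.2.2) :=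
      (Primrec.cond (primrec_memB.comp (Primrec.fst.comp Primrec.snd)
          (Primrec.snd.comp Primrec.fst))
        (Primrec.snd.comp Primrec.snd) (Primrec.const false)).of_eq fun x => by
          cases h : memB x.2.1 x.1.2 <;> simp [h]
    exact this.to₂
  exact (Primrec.list_foldr Primrec.fst (Primrec.const true) hh).to₂.of_eq fun _ _ => rfl

theorem primrec_stepG : Primrec₂ stepG := by
  have hh : Primrec₂ fun (a : Wd × Ltr) (p : Ltr × Wd) =>
      (if subB p.1 a.2 then p.2 else p.1 :: p.2) := by
    have : Primrec fun x : (Wd × Ltr) × Ltr × Wd =>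
        (if subB x.2.1 x.1.2 then x.2.2 else x.2.1 :: x.2.2) :=
      (Primrec.cond (primrec_subB.comp (Primrec.fst.comp Primrec.snd)
          (Primrec.snd.comp Primrec.fst))
        (Primrec.snd.comp Primrec.snd)
        (Primrec.list_cons.comp (Primrec.fst.comp Primrec.snd)
          (Primrec.snd.comp Primrec.snd))).of_eq fun x => by
          cases h : subB x.2.1 x.1.2 <;> simp [h]
    exact this.to₂
  exact (Primrec.list_casesOn Primrec.fst (Primrec.const ([] : Wd)) hh).to₂.of_eq fun l b => by
    cases l <;> rfl

theorem primrec_isEmpty : Primrec (fun l : Wd => l.isEmpty) :=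
  (Primrec₂.comp (f := fun (a b : Wd) => decide (a = b)) Primrec.eq.decide Primrec.id
    (Primrec.const ([] : Wd))).of_eq fun l => by cases l <;> simp

theorem monDom_computable : Computable₂ monDom := by
  have h1 : Primrec₂ monDom := by
    have hh : Primrec₂ fun (a : Wd × Wd) (p : Wd × Ltr) => stepG p.1 p.2 :=
      (primrec_stepG.comp (Primrec.fst.comp Primrec.snd)
        (Primrec.snd.comp Primrec.snd)).to₂
    exact (primrec_isEmpty.comp
      (Primrec.list_foldl Primrec.snd Primrec.fst hh)).to₂.of_eq fun _ _ => rfl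
  exact h1.to_comp

end Comp


section Comp2
open Computable
variable {succ : Wd → List Wd} {bad : Wd → Bool}

theorem adjB_computable (hsucc : Computable succ) : Computable₂ (adjB succ) := by
  have hinner : Computable₂ fun (x : (List Wd × ℕ) × Wd) (y : Wd) => memW y (succ x.2) :=
    (memW_computable.comp snd (hsucc.comp (snd.comp fst))).to₂
  have hmid : Computable₂ fun (Mi : List Wd × ℕ) (x : Wd) =>
      Mi.1[Mi.2 + 1]?.elim true fun y => memW y (succ x) := by
    refine (optElim_computable (o := fun p : (List Wd × ℕ) × Wd => p.1.1[p.1.2 + 1]?)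
      (d := fun _ => true)
      (Primrec.list_getElem?.to_comp.comp (fst.comp fst)
        (Primrec.succ.to_comp.comp (snd.comp fst)))
      (const true) hinner).to₂
  exact ((optElim_computable (o := fun Mi : List Wd × ℕ => Mi.1[Mi.2]?)
    (d := fun _ => true)
    (Primrec.list_getElem?.to_comp.comp fst snd) (const true) hmid)).to₂

theorem chainB_computable (hsucc : Computable succ) : Computable (chainB succ) :=
  ((natAll_computable (adjB_computable hsucc)).comp Computable.id
    ((Primrec.nat_sub.comp Primrec.list_length (Primrec.const 1)).to_comp)).of_eq
    fun _ => rfl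

theorem lastBadB_computable (hbad : Computable bad) : Computable (lastBadB bad) :=
  optElim_computable
    (Primrec.list_head?.to_comp.comp Primrec.list_reverse.to_comp)
    (const false) ((hbad.comp snd).to₂)

theorem pathChk_computable (hsucc : Computable succ) (hbad : Computable bad) :
    Computable₂ (pathChk succ bad) := by
  have hcons : Computable fun p : Wd × List Wd => p.1 :: p.2 := list_cons.comp fst snd
  exact (computable_and ((chainB_computable hsucc).comp hcons)
    ((lastBadB_computable hbad).comp hcons)).to₂

theorem certChk_computable (hsucc : Computable succ) (hbad : Computable bad) (k : ℕ) :
    Computable₂ (certChk succ bad k) := by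
  -- innermost : fun (W' : Wd) (B : List Wd) => listAnyB (fun b' => monDom b' W') B
  have hinner : Computable₂ fun (W' : Wd) (B : List Wd) =>
      listAnyB (fun b' => monDom b' W') B :=
    listAnyB_computable ((monDom_computable.comp snd fst).to₂)
  -- same with arguments swapped
  have hinner' : Computable₂ fun (B : List Wd) (W' : Wd) =>
      listAnyB (fun b' => monDom b' W') B :=
    (hinner.comp snd fst).to₂
  -- all W' ∈ l, ...
  have hallsucc : Computable₂ fun (B : List Wd) (l : List Wd) =>
      listAllB (fun W' => listAnyB (fun b' => monDom b' W') B) l :=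
    listAllB_computable hinner'
  -- mid : fun (B : List Wd) (b : Wd) => ...
  have hmid : Computable₂ fun (B : List Wd) (b : Wd) =>
      (validB k b && !bad b &&
        listAllB (fun W' => listAnyB (fun b' => monDom b' W') B) (succ b)) :=
    (computable_and
      (computable_and ((validB_computable k).comp snd)
        (computable_not (hbad.comp snd)))
      (hallsucc.comp fst (hsucc.comp snd))).to₂
  -- first conjunct : fun (W₀ : Wd) (B : List Wd) => listAnyB (fun b => monDom b W₀) B
  have hany : Computable₂ fun (W₀ : Wd) (B : List Wd) =>
      listAnyB (fun b => monDom b W₀) B :=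
    listAnyB_computable ((monDom_computable.comp snd fst).to₂)
  -- second conjunct as a function of the pair
  have hall : Computable fun p : Wd × List Wd =>
      listAllB (fun b => validB k b && !bad b &&
        listAllB (fun W' => listAnyB (fun b' => monDom b' W') p.2) (succ b)) p.2 := by
    have := listAllB_computable (p := fun (p : Wd × List Wd) (b : Wd) =>
      validB k b && !bad b &&
        listAllB (fun W' => listAnyB (fun b' => monDom b' W') p.2) (succ b))
      ((hmid.comp (snd.comp fst) snd).to₂)
    exact this.comp Computable.id snd
  exact (computable_and (hany : Computable _) hall).to₂

end Comp2

/-! ### r.e. predicates from bounded search -/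

theorem re_of_exists {α : Type} [Primcodable α] {p : α → Prop} (f : α → ℕ → Bool)
    (hf : Computable₂ f) (H : ∀ a, p a ↔ ∃ n, f a n = true) : REPred p := by
  have h1 : Partrec fun a => (Nat.rfind fun n => Part.some (f a n)).map fun _ => () := by
    refine Partrec.map (Partrec.rfind ?_) ((Computable.const ()).comp Computable.fst).to₂
    exact (hf.partrec₂).of_eq fun a => rfl
  refine h1.of_eq fun a => Part.ext fun u => ?_
  cases u
  constructor
  · intro h
    rw [Part.mem_map_iff] at h
    obtain ⟨n, hn, -⟩ := h
    have hspec := Nat.rfind_spec hn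
    rw [Part.mem_some_iff] at hspec
    rw [Part.mem_assert_iff]
    exact ⟨(H a).mpr ⟨n, hspec.symm⟩, Part.mem_some _⟩
  · intro h
    rw [Part.mem_assert_iff] at h
    obtain ⟨hp, -⟩ := h
    obtain ⟨n, hn⟩ := (H a).mp hp
    have hdom : (Nat.rfind fun n => Part.some (f a n)).Dom := by
      refine Nat.rfind_dom.mpr ?_
      exact ⟨n, by simp [hn], fun {m} _ => trivial⟩
    rw [Part.mem_map_iff]
    exact ⟨(Nat.rfind fun n => Part.some (f a n)).get hdom, Part.get_mem hdom, rfl⟩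


end BadReach

open BadReach in
/-- Reachability of a bad state is decidable for any
finitely-branching transition system over words over a finite powerset
alphabet with computable successor lists, in which the inverse of monotone
domination is a simulation and badness is downward closed under monotone
domination.  (The region-abstracted system `H` of a one-clock alternating
timed automaton is such a system, so reachability of a bad state in `H` from
`W₀` is decidable.) -/
theorem bad_state_reachability_decidable
    (k : ℕ) (succ : List (List ℕ) → List (List (List ℕ)))
    (bad : List (List ℕ) → Bool)
    (hsucc : Computable succ) (hbad : Computable bad)
    (hvalid : ∀ W W', ValidWord k W → W' ∈ succ W → ValidWord k W')
    (hsim : ∀ W₁ W₂ W₂', ValidWord k W₁ → ValidWord k W₂ → MonDomL W₁ W₂ →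
        W₂' ∈ succ W₂ → ∃ W₁' ∈ succ W₁, MonDomL W₁' W₂')
    (hdown : ∀ W W', MonDomL W W' → bad W' = true → bad W = true) :
    ∃ f : List (List ℕ) → Bool, Computable f ∧
      ∀ W₀ : List (List ℕ), ValidWord k W₀ →
        (f W₀ = true ↔
          ∃ W, Relation.ReflTransGen (fun X Y => Y ∈ succ X) W₀ W ∧ bad W = true) := by
  classical
  set P : Wd → Prop := fun W₀ => ValidWord k W₀ ∧ Reach succ bad W₀ with hP
  -- positive side: search for a path certificate
  have hre : REPred P := by
    refine re_of_exists
      (fun a n => validB k a &&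
        (Encodable.decode (α := List Wd) n).elim false (pathChk succ bad a)) ?_ ?_
    · refine (computable_and ((validB_computable k).comp Computable.fst)
        (optElim_computable (o := fun p : Wd × ℕ => Encodable.decode (α := List Wd) p.2)
          (d := fun _ => false) (f := fun p L => pathChk succ bad p.1 L)
          (Computable.decode.comp Computable.snd) (Computable.const false)
          (((pathChk_computable hsucc hbad).comp
            (Computable.fst.comp Computable.fst) Computable.snd).to₂))).to₂
    · intro a
      constructor
      · rintro ⟨hva, hreach⟩
        obtain ⟨L, hL⟩ := (pathChk_iff succ bad).mpr hreach
        refine ⟨Encodable.encode L, ?_⟩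
        show (validB k a &&
          (Encodable.decode (α := List Wd) (Encodable.encode L)).elim false
            (pathChk succ bad a)) = true
        rw [Encodable.encodek]
        simp only [Option.elim_some]
        rw [Bool.and_eq_true]
        exact ⟨validB_iff.mpr hva, hL⟩
      · rintro ⟨n, hn⟩
        rw [Bool.and_eq_true] at hn
        obtain ⟨hva, hrest⟩ := hn
        refine ⟨validB_iff.mp hva, ?_⟩
        cases hdec : Encodable.decode (α := List Wd) n with
        | none => rw [hdec] at hrest; simp at hrest
        | some L =>
          rw [hdec] at hrest
          simp only [Option.elim_some] at hrest
          exact (pathChk_iff succ bad).mp ⟨L, hrest⟩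
  -- negative side: search for an invariant certificate
  have hnre : REPred fun a => ¬P a := by
    refine re_of_exists
      (fun a n => !validB k a ||
        (Encodable.decode (α := List Wd) n).elim false (certChk succ bad k a)) ?_ ?_
    · refine (computable_or (computable_not ((validB_computable k).comp Computable.fst))
        (optElim_computable (o := fun p : Wd × ℕ => Encodable.decode (α := List Wd) p.2)
          (d := fun _ => false) (f := fun p B => certChk succ bad k p.1 B)
          (Computable.decode.comp Computable.snd) (Computable.const false)
          (((certChk_computable hsucc hbad k).comp
            (Computable.fst.comp Computable.fst) Computable.snd).to₂))).to₂
    · intro a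
      constructor
      · intro hnp
        by_cases hva : ValidWord k a
        · have hnr : ¬Reach succ bad a := fun hr => hnp ⟨hva, hr⟩
          obtain ⟨B, hB⟩ := cert_complete hvalid hva hnr
          refine ⟨Encodable.encode B, ?_⟩
          show (!validB k a ||
            (Encodable.decode (α := List Wd) (Encodable.encode B)).elim false
              (certChk succ bad k a)) = true
          rw [Encodable.encodek]
          simp only [Option.elim_some]
          rw [Bool.or_eq_true]
          exact Or.inr hB
        · refine ⟨0, ?_⟩
          rw [Bool.or_eq_true, Bool.not_eq_true']
          exact Or.inl (by rw [← Bool.not_eq_true]; exact fun h => hva (validB_iff.mp h))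
      · rintro ⟨n, hn⟩
        rw [Bool.or_eq_true] at hn
        rcases hn with hn | hn
        · rw [Bool.not_eq_true'] at hn
          rintro ⟨hva, -⟩
          rw [validB_iff.mpr hva] at hn
          exact absurd hn (by simp)
        · cases hdec : Encodable.decode (α := List Wd) n with
          | none => rw [hdec] at hn; simp at hn
          | some B =>
            rw [hdec] at hn
            simp only [Option.elim_some] at hn
            rintro ⟨hva, hr⟩
            exact cert_sound hvalid hsim hdown hva hn hr
  have hcp : ComputablePred P := ComputablePred.computable_iff_re_compl_re'.mpr ⟨hre, hnre⟩
  obtain ⟨f, hf, hPf⟩ := ComputablePred.computable_iff.mp hcp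
  refine ⟨f, hf, fun W₀ hW₀ => ?_⟩
  have hiff : P W₀ ↔ f W₀ = true := by rw [hPf]
  constructor
  · intro h
    obtain ⟨-, hreach⟩ := hiff.mpr h
    exact hreach
  · intro h
    exact hiff.mp ⟨hW₀, h⟩
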